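/- For every n ≥ 2, the n-dimensional Niemytzki space (X, τ_N) is Tychonoff: it is T1 and completely regular (every point and closed set not containing it are separated by a continuous real-valued function). -/

import Mathlib

open Metric Set TopologicalSpace

noncomputable section

/-- The last coordinate `x (n-1)` of a point of `EuclideanSpace ℝ (Fin n)`
(junk value `0` if `n = 0`). -/
def lastCoord (n : ℕ) (x : EuclideanSpace ℝ (Fin n)) : ℝ :=
  if h : 0 < n then x ⟨n - 1, Nat.sub_lt h one_pos⟩ else 0

/-- The closed upper half-space `X = {x : x (n-1) ≥ 0}`. -/
def HalfSpace (n : ℕ) : Set (EuclideanSpace ℝ (Fin n)) := {x | 0 ≤ lastCoord n x}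

/-- The open upper half-space `P = {x : x (n-1) > 0}`. -/
def OpenHalf (n : ℕ) : Set (EuclideanSpace ℝ (Fin n)) := {x | 0 < lastCoord n x}

/-- The boundary hyperplane `L = {x : x (n-1) = 0}`. -/
def Bdry (n : ℕ) : Set (EuclideanSpace ℝ (Fin n)) := {x | lastCoord n x = 0}

/-- The `n`-th standard basis vector `e` (junk value `0` if `n = 0`). -/
def eVec (n : ℕ) : EuclideanSpace ℝ (Fin n) :=
  if h : 0 < n then EuclideanSpace.single ⟨n - 1, Nat.sub_lt h one_pos⟩ (1 : ℝ) else 0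

/-- The tangent ball `B̃(a, ε) = {a} ∪ B(a + ε • e, ε)`. -/
def tangentBall (n : ℕ) (a : EuclideanSpace ℝ (Fin n)) (ε : ℝ) :
    Set (EuclideanSpace ℝ (Fin n)) :=
  {a} ∪ ball (a + ε • eVec n) ε

/-- The generating family for the topology `τ(A)` on `X`:
balls `B(a,ε)` with `a ∈ P`, `0 < ε < a (n-1)`; traces `B(a,ε) ∩ X` with `a ∈ A`, `ε > 0`;
and tangent balls `B̃(a,ε)` with `a ∈ L \ A`, `ε > 0`. -/
def niemGen (n : ℕ) (A : Set (EuclideanSpace ℝ (Fin n))) : Set (Set (HalfSpace n)) :=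
  {s | ∃ a ∈ OpenHalf n, ∃ ε, 0 < ε ∧ ε < lastCoord n a ∧
      s = Subtype.val ⁻¹' ball a ε} ∪
  {s | ∃ a ∈ A, ∃ ε, 0 < ε ∧ s = Subtype.val ⁻¹' ball a ε} ∪
  {s | ∃ a ∈ Bdry n \ A, ∃ ε, 0 < ε ∧ s = Subtype.val ⁻¹' tangentBall n a ε}

/-- The topology `τ(A)` on `X`; `τ(∅)` is the Niemytzki topology `τ_N`. -/
def tau (n : ℕ) (A : Set (EuclideanSpace ℝ (Fin n))) : TopologicalSpace (HalfSpace n) :=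
  generateFrom (niemGen n A)

/-- The inclusion of `L` into `X`. -/
def inclLX (n : ℕ) (x : Bdry n) : HalfSpace n := ⟨x.1, le_of_eq x.2.symm⟩

/-- The subspace topology `τ(A)|_L` on `L` induced from `(X, τ(A))`. -/
def tauL (n : ℕ) (A : Set (EuclideanSpace ℝ (Fin n))) : TopologicalSpace (Bdry n) :=
  TopologicalSpace.induced (inclLX n) (tau n A)

/-- A space is perfect if every closed set is a `Gδ`-set. -/
def IsPerfectSpace (X : Type*) [TopologicalSpace X] : Prop :=
  ∀ s : Set X, IsClosed s → IsGδ s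

/-- An `Fσ`-set: a countable union of closed sets. -/
def IsFsigma {X : Type*} [TopologicalSpace X] (s : Set X) : Prop :=
  ∃ F : ℕ → Set X, (∀ i, IsClosed (F i)) ∧ s = ⋃ i, F i

/-- Countably paracompact: every countable open cover admits a locally finite open refinement. -/
def CountablyParacompact (X : Type*) [TopologicalSpace X] : Prop :=
  ∀ u : ℕ → Set X, (∀ i, IsOpen (u i)) → (⋃ i, u i) = Set.univ →
    ∃ (ι : Type) (v : ι → Set X), (∀ j, IsOpen (v j)) ∧ (⋃ j, v j) = Set.univ ∧
      LocallyFinite v ∧ ∀ j, ∃ i, v j ⊆ u i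

/-- A zero set: the zero locus of a continuous real-valued function. -/
def IsZeroSet {X : Type*} [TopologicalSpace X] (s : Set X) : Prop :=
  ∃ f : X → ℝ, Continuous f ∧ s = f ⁻¹' {0}

/-- `Y` is z-embedded in `X` if every zero set of the subspace `Y`
is the trace on `Y` of a zero set of `X`. -/
def ZEmbedded {X : Type*} [TopologicalSpace X] (Y : Set X) : Prop :=
  ∀ s : Set Y, IsZeroSet s → ∃ Z : Set X, IsZeroSet Z ∧ s = Subtype.val ⁻¹' Z

/-- `Y` is `C*`-embedded in `X` if every bounded continuous real-valued function on the
subspace `Y` extends to a bounded continuous function on `X`. -/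
def CStarEmbedded {X : Type*} [TopologicalSpace X] (Y : Set X) : Prop :=
  ∀ f : Y → ℝ, Continuous f → (∃ M, ∀ y, |f y| ≤ M) →
    ∃ g : X → ℝ, Continuous g ∧ (∃ M, ∀ x, |g x| ≤ M) ∧ ∀ y : Y, g ↑y = f y
end
section NiemAux

variable {n : ℕ}

local notation "E" => EuclideanSpace ℝ (Fin n)

theorem lastCoord_eq (hn : 0 < n) (x : EuclideanSpace ℝ (Fin n)) :
    lastCoord n x = x ⟨n - 1, Nat.sub_lt hn one_pos⟩ := dif_pos hn

theorem eVec_eq (hn : 0 < n) :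
    eVec n = EuclideanSpace.single ⟨n - 1, Nat.sub_lt hn one_pos⟩ (1 : ℝ) := dif_pos hn

theorem inner_eVec (hn : 0 < n) (x : E) :
    (inner ℝ x (eVec n) : ℝ) = lastCoord n x := by
  rw [eVec_eq hn, lastCoord_eq hn]
  simpa using EuclideanSpace.inner_single_right (𝕜 := ℝ)
    (⟨n - 1, Nat.sub_lt hn one_pos⟩ : Fin n) 1 x

theorem norm_eVec (hn : 0 < n) : ‖eVec n‖ = 1 := by
  rw [eVec_eq hn]; simp

theorem abs_lastCoord_sub_le (hn : 0 < n) (x y : E) :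
    |lastCoord n x - lastCoord n y| ≤ dist x y := by
  rw [← inner_eVec hn, ← inner_eVec hn, ← inner_sub_left, dist_eq_norm]
  calc |(inner ℝ (x - y) (eVec n) : ℝ)| ≤ ‖x - y‖ * ‖eVec n‖ := abs_real_inner_le_norm _ _
    _ = ‖x - y‖ := by rw [norm_eVec hn, mul_one]

theorem mem_tb (hn : 0 < n) {a : E} (ha : lastCoord n a = 0) {ε : ℝ} (hε : 0 < ε) (y : E) :
    y ∈ Metric.ball (a + ε • eVec n) ε ↔ ‖y - a‖ ^ 2 < 2 * ε * lastCoord n y := by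
  have h1 : dist y (a + ε • eVec n) ^ 2 = ‖y - a‖ ^ 2 - 2 * ε * lastCoord n y + ε ^ 2 := by
    rw [dist_eq_norm]
    have h2 : y - (a + ε • eVec n) = (y - a) - ε • eVec n := by abel
    rw [h2, norm_sub_sq_real, real_inner_smul_right, inner_eVec hn, norm_smul,
      norm_eVec hn]
    have : lastCoord n (y - a) = lastCoord n y := by
      rw [← inner_eVec hn, inner_sub_left, inner_eVec hn, inner_eVec hn, ha, sub_zero]
    rw [this]
    rw [Real.norm_eq_abs]
    rw [mul_pow, sq_abs]
    ring
  rw [Metric.mem_ball]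
  constructor
  · intro h
    nlinarith [dist_nonneg (x := y) (y := a + ε • eVec n)]
  · intro h
    nlinarith [dist_nonneg (x := y) (y := a + ε • eVec n)]

theorem lastCoord_pos_of_mem (hn : 0 < n) {a : E} (ha : lastCoord n a = 0) {ε : ℝ}
    (hε : 0 < ε) {y : E} (hy : y ∈ Metric.ball (a + ε • eVec n) ε) :
    0 < lastCoord n y := by
  rw [mem_tb hn ha hε] at hy
  nlinarith [sq_nonneg ‖y - a‖]

theorem tb_mono (hn : 0 < n) (a : E) {δ ε : ℝ} (h0 : 0 < δ) (h : δ ≤ ε) :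
    tangentBall n a δ ⊆ tangentBall n a ε := by
  rintro y (hy | hy)
  · exact Or.inl hy
  · right
    rw [Metric.mem_ball] at hy ⊢
    have hd : dist (a + δ • eVec n) (a + ε • eVec n) = ε - δ := by
      rw [dist_eq_norm]
      have h2 : (a + δ • eVec n) - (a + ε • eVec n) = (δ - ε) • eVec n := by
        rw [sub_smul]; abel
      rw [h2, norm_smul, norm_eVec hn, mul_one, Real.norm_eq_abs, abs_of_nonpos (by linarith)]
      linarith
    calc dist y (a + ε • eVec n) ≤ dist y (a + δ • eVec n) + dist (a + δ • eVec n) (a + ε • eVec n) :=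
          dist_triangle _ _ _
      _ < δ + (ε - δ) := by rw [hd]; linarith
      _ = ε := by ring

theorem tb_subset_ball (hn : 0 < n) (a : E) {ε : ℝ} (hε : 0 < ε) :
    tangentBall n a ε ⊆ Metric.ball a (2 * ε) := by
  rintro y (hy | hy)
  · rw [Set.mem_singleton_iff] at hy
    subst hy
    exact Metric.mem_ball_self (by linarith)
  · rw [Metric.mem_ball] at hy ⊢
    have hd : dist (a + ε • eVec n) a = ε := by
      rw [dist_eq_norm, add_sub_cancel_left, norm_smul, norm_eVec hn, Real.norm_eq_abs,
        abs_of_pos hε, mul_one]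
    calc dist y a ≤ dist y (a + ε • eVec n) + dist (a + ε • eVec n) a := dist_triangle _ _ _
      _ < ε + ε := by rw [hd]; linarith
      _ = 2 * ε := by ring

end NiemAux
open Topology

section NiemBasis

variable {n : ℕ}

local notation "E" => EuclideanSpace ℝ (Fin n)

/-- Type-I balls are contained in the open half space. -/
theorem ballI_subset_openHalf (hn : 0 < n) {a : E} {ε : ℝ} (hε : ε < lastCoord n a)
    {y : E} (hy : y ∈ Metric.ball a ε) : 0 < lastCoord n y := by
  rw [Metric.mem_ball] at hy
  have h1 := abs_lastCoord_sub_le hn y a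
  have h2 := abs_le.mp (h1.trans hy.le)
  linarith [h2.1]

/-- Around any point of a generator with positive last coordinate there is a
small euclidean ball (staying below the last coordinate) inside the generator. -/
theorem gen_shrink_pos (hn : 0 < n) {t : Set (HalfSpace n)} (ht : t ∈ niemGen n ∅)
    {x : HalfSpace n} (hx : x ∈ t) (hpos : 0 < lastCoord n x.val) :
    ∃ r : ℝ, 0 < r ∧ r < lastCoord n x.val ∧
      Subtype.val ⁻¹' Metric.ball x.val r ⊆ t := by
  rcases ht with (⟨a, _, ε, hε, hεa, rfl⟩ | ⟨a, ha, _⟩) | ⟨a, ha, ε, hε, rfl⟩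
  · -- type I
    rw [Set.mem_preimage, Metric.mem_ball] at hx
    refine ⟨min (ε - dist x.val a) (lastCoord n x.val / 2),
      lt_min (by linarith) (by linarith), ?_, ?_⟩
    · exact lt_of_le_of_lt (min_le_right _ _) (by linarith)
    · intro y hy
      rw [Set.mem_preimage, Metric.mem_ball] at hy
      rw [Set.mem_preimage, Metric.mem_ball]
      have h3 : dist y.val x.val < ε - dist x.val a :=
        lt_of_lt_of_le hy (min_le_left _ _)
      calc dist y.val a ≤ dist y.val x.val + dist x.val a := dist_triangle _ _ _
        _ < ε := by linarith
  · exact absurd ha (Set.notMem_empty a)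
  · -- type III
    have ha0 : lastCoord n a = 0 := ha.1
    rcases hx with hx' | hx'
    · rw [Set.mem_singleton_iff] at hx'
      rw [hx', ha0] at hpos
      exact absurd hpos (lt_irrefl 0)
    · rw [Metric.mem_ball] at hx'
      refine ⟨min (ε - dist x.val (a + ε • eVec n)) (lastCoord n x.val / 2),
        lt_min (by linarith) (by linarith), ?_, ?_⟩
      · exact lt_of_le_of_lt (min_le_right _ _) (by linarith)
      · intro y hy
        rw [Set.mem_preimage, Metric.mem_ball] at hy
        refine Set.mem_preimage.mpr (Or.inr (Metric.mem_ball.mpr ?_))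
        have h3 : dist y.val x.val < ε - dist x.val (a + ε • eVec n) :=
          lt_of_lt_of_le hy (min_le_left _ _)
        calc dist y.val (a + ε • eVec n)
            ≤ dist y.val x.val + dist x.val (a + ε • eVec n) := dist_triangle _ _ _
          _ < ε := by linarith

/-- A generator containing a boundary point is a tangent ball at that point. -/
theorem gen_at_bdry (hn : 0 < n) {t : Set (HalfSpace n)} (ht : t ∈ niemGen n ∅)
    {x : HalfSpace n} (hx : x ∈ t) (h0 : lastCoord n x.val = 0) :
    ∃ ε : ℝ, 0 < ε ∧ t = Subtype.val ⁻¹' tangentBall n x.val ε := by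
  rcases ht with (⟨a, _, ε, hε, hεa, rfl⟩ | ⟨a, ha, _⟩) | ⟨a, ha, ε, hε, rfl⟩
  · have h1 := ballI_subset_openHalf hn hεa (Set.mem_preimage.mp hx)
    rw [h0] at h1; exact absurd h1 (lt_irrefl 0)
  · exact absurd ha (Set.notMem_empty a)
  · rcases hx with hx' | hx'
    · have h1 : x.val = a := Set.mem_singleton_iff.mp hx'
      exact ⟨ε, hε, by rw [h1]⟩
    · have h1 := lastCoord_pos_of_mem hn ha.1 hε hx'
      rw [h0] at h1; exact absurd h1 (lt_irrefl 0)

theorem niem_basis (hn : 0 < n) :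
    @TopologicalSpace.IsTopologicalBasis (HalfSpace n) (tau n ∅) (niemGen n ∅) := by
  letI : TopologicalSpace (HalfSpace n) := tau n ∅
  refine ⟨?_, ?_, rfl⟩
  · rintro t₁ ht₁ t₂ ht₂ x ⟨hx₁, hx₂⟩
    rcases lt_or_eq_of_le (show (0:ℝ) ≤ lastCoord n x.val from x.2) with hpos | h0
    · obtain ⟨r₁, hr₁, hr₁', hsub₁⟩ := gen_shrink_pos hn ht₁ hx₁ hpos
      obtain ⟨r₂, hr₂, hr₂', hsub₂⟩ := gen_shrink_pos hn ht₂ hx₂ hpos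
      refine ⟨Subtype.val ⁻¹' Metric.ball x.val (min r₁ r₂), ?_, ?_, ?_⟩
      · exact Or.inl (Or.inl ⟨x.val, hpos, min r₁ r₂, lt_min hr₁ hr₂,
          lt_of_le_of_lt (min_le_left _ _) hr₁', rfl⟩)
      · exact Set.mem_preimage.mpr (Metric.mem_ball_self (lt_min hr₁ hr₂))
      · intro y hy
        rw [Set.mem_preimage] at hy
        exact ⟨hsub₁ (Set.mem_preimage.mpr (Metric.ball_subset_ball (min_le_left _ _) hy)),
          hsub₂ (Set.mem_preimage.mpr (Metric.ball_subset_ball (min_le_right _ _) hy))⟩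
    · obtain ⟨ε₁, hε₁, rfl⟩ := gen_at_bdry hn ht₁ hx₁ h0.symm
      obtain ⟨ε₂, hε₂, rfl⟩ := gen_at_bdry hn ht₂ hx₂ h0.symm
      refine ⟨Subtype.val ⁻¹' tangentBall n x.val (min ε₁ ε₂), ?_, ?_, ?_⟩
      · exact Or.inr ⟨x.val, ⟨h0.symm, Set.notMem_empty _⟩, min ε₁ ε₂, lt_min hε₁ hε₂, rfl⟩
      · exact Set.mem_preimage.mpr (Or.inl rfl)
      · intro y hy
        rw [Set.mem_preimage] at hy
        exact ⟨Set.mem_preimage.mpr (tb_mono hn x.val (lt_min hε₁ hε₂) (min_le_left _ _) hy),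
          Set.mem_preimage.mpr (tb_mono hn x.val (lt_min hε₁ hε₂) (min_le_right _ _) hy)⟩
  · apply Set.eq_univ_of_forall
    intro x
    rcases lt_or_eq_of_le (show (0:ℝ) ≤ lastCoord n x.val from x.2) with hpos | h0
    · exact ⟨Subtype.val ⁻¹' Metric.ball x.val (lastCoord n x.val / 2),
        Or.inl (Or.inl ⟨x.val, hpos, _, by linarith, by linarith, rfl⟩),
        Set.mem_preimage.mpr (Metric.mem_ball_self (by linarith))⟩
    · exact ⟨Subtype.val ⁻¹' tangentBall n x.val 1,
        Or.inr ⟨x.val, ⟨h0.symm, Set.notMem_empty _⟩, 1, one_pos, rfl⟩,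
        Set.mem_preimage.mpr (Or.inl rfl)⟩

theorem isOpen_tau_preimage (hn : 0 < n) {U : Set (EuclideanSpace ℝ (Fin n))} (hU : IsOpen U) :
    IsOpen[tau n ∅] (Subtype.val ⁻¹' U : Set (HalfSpace n)) := by
  letI : TopologicalSpace (HalfSpace n) := tau n ∅
  rw [(niem_basis hn).isOpen_iff]
  intro x hx
  rw [Set.mem_preimage] at hx
  rcases lt_or_eq_of_le (show (0:ℝ) ≤ lastCoord n x.val from x.2) with hpos | h0
  · obtain ⟨ε, hε, hball⟩ := Metric.isOpen_iff.mp hU x.val hx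
    refine ⟨Subtype.val ⁻¹' Metric.ball x.val (min ε (lastCoord n x.val / 2)),
      Or.inl (Or.inl ⟨x.val, hpos, _, lt_min hε (by linarith),
        lt_of_le_of_lt (min_le_right _ _) (by linarith), rfl⟩),
      Set.mem_preimage.mpr (Metric.mem_ball_self (lt_min hε (by linarith))), ?_⟩
    intro y hy
    rw [Set.mem_preimage] at hy
    exact Set.mem_preimage.mpr (hball (Metric.ball_subset_ball (min_le_left _ _) hy))
  · obtain ⟨ε, hε, hball⟩ := Metric.isOpen_iff.mp hU x.val hx
    refine ⟨Subtype.val ⁻¹' tangentBall n x.val (ε / 4),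
      Or.inr ⟨x.val, ⟨h0.symm, Set.notMem_empty _⟩, ε / 4, by linarith, rfl⟩,
      Set.mem_preimage.mpr (Or.inl rfl), ?_⟩
    intro y hy
    rw [Set.mem_preimage] at hy
    exact Set.mem_preimage.mpr
      (hball (Metric.ball_subset_ball (by linarith)
        (tb_subset_ball hn x.val (by linarith) hy)))

/-- The Niemytzki topology is finer than the euclidean subspace topology. -/
theorem tau_le_euclid (hn : 0 < n) :
    tau n ∅ ≤ (instTopologicalSpaceSubtype : TopologicalSpace (HalfSpace n)) := by
  rw [TopologicalSpace.le_def]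
  intro s hs
  obtain ⟨U, hU, rfl⟩ := isOpen_induced_iff.mp hs
  exact isOpen_tau_preimage hn hU

theorem cont_of_euclid (hn : 0 < n) {Y : Type*} [tY : TopologicalSpace Y]
    {f : HalfSpace n → Y} (hf : Continuous f) : Continuous[tau n ∅, tY] f :=
  continuous_le_dom (tau_le_euclid hn) hf

theorem niem_t1 (hn : 0 < n) : @T1Space (HalfSpace n) (tau n ∅) :=
  t1Space_antitone (tau_le_euclid hn) inferInstance

end NiemBasis
section NiemBump

variable {n : ℕ}

local notation "E" => EuclideanSpace ℝ (Fin n)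

open Classical in
/-- The separating function for a boundary point `a` and the tangent ball `B̃(a, ε)`. -/
noncomputable def bumpG (n : ℕ) (a : EuclideanSpace ℝ (Fin n)) (ε : ℝ) (y : HalfSpace n) : ℝ :=
  if lastCoord n y.val = 0 then (if y.val = a then 0 else 1)
  else min 1 (‖y.val - a‖ ^ 2 / (2 * ε * lastCoord n y.val))

theorem bumpG_tip {a : E} (ha : lastCoord n a = 0) {ε : ℝ} {y : HalfSpace n}
    (hy : y.val = a) : bumpG n a ε y = 0 := by
  rw [bumpG, if_pos (by rw [hy, ha]), if_pos hy]

theorem bumpG_nonneg {a : E} {ε : ℝ} (hε : 0 < ε) (y : HalfSpace n) : 0 ≤ bumpG n a ε y := by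
  rw [bumpG]
  rcases lt_or_eq_of_le (show (0:ℝ) ≤ lastCoord n y.val from y.2) with hpos | h0
  · rw [if_neg (ne_of_gt hpos)]
    have : (0:ℝ) ≤ ‖y.val - a‖ ^ 2 / (2 * ε * lastCoord n y.val) := by positivity
    exact le_min zero_le_one this
  · rw [if_pos h0.symm]
    split <;> norm_num

theorem bumpG_one (hn : 0 < n) {a : E} (ha : lastCoord n a = 0) {ε : ℝ} (hε : 0 < ε)
    {y : HalfSpace n} (hy : y ∉ (Subtype.val ⁻¹' tangentBall n a ε : Set (HalfSpace n))) :
    bumpG n a ε y = 1 := by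
  rw [Set.mem_preimage, tangentBall, Set.mem_union, Set.mem_singleton_iff] at hy
  push_neg at hy
  rw [bumpG]
  rcases lt_or_eq_of_le (show (0:ℝ) ≤ lastCoord n y.val from y.2) with hpos | h0
  · rw [if_neg (ne_of_gt hpos)]
    have h1 : ¬ ‖y.val - a‖ ^ 2 < 2 * ε * lastCoord n y.val := by
      rw [← mem_tb hn ha hε]; exact hy.2
    push_neg at h1
    rw [min_eq_left]
    rw [le_div_iff₀ (by positivity)]
    linarith
  · rw [if_pos h0.symm, if_neg hy.1]

theorem lastCoord_cont (hn : 0 < n) : Continuous (lastCoord n : E → ℝ) := by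
  have h : (lastCoord n : E → ℝ) = fun z => (inner ℝ z (eVec n) : ℝ) :=
    funext fun z => (inner_eVec hn z).symm
  rw [h]
  exact continuous_id.inner continuous_const

open Topology in
theorem bumpG_cont (hn : 0 < n) {a : E} (ha : lastCoord n a = 0) {ε : ℝ} (hε : 0 < ε) :
    Continuous[tau n ∅, inferInstance] (bumpG n a ε) := by
  letI : TopologicalSpace (HalfSpace n) := tau n ∅
  rw [continuous_iff_continuousAt]
  intro p
  rw [ContinuousAt, (niem_basis hn).nhds_hasBasis.tendsto_iff Metric.nhds_basis_ball]
  intro η hη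
  rcases lt_or_eq_of_le (show (0:ℝ) ≤ lastCoord n p.val from p.2) with hpos | h0
  · -- interior point: euclidean continuity
    have hH : ContinuousAt (fun z : E => min 1 (‖z - a‖ ^ 2 / (2 * ε * lastCoord n z)))
        p.val := by
      have hdiv : ContinuousAt (fun z : E => ‖z - a‖ ^ 2 / (2 * ε * lastCoord n z)) p.val := by
        apply ContinuousAt.div
        · exact (((continuous_id.sub continuous_const).norm.pow 2)).continuousAt
        · exact (continuous_const.mul (lastCoord_cont hn)).continuousAt
        · have : (0:ℝ) < 2 * ε * lastCoord n p.val := by positivity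
          exact ne_of_gt this
      exact (continuous_min.continuousAt).comp (continuousAt_const.prodMk hdiv)
    rcases Metric.continuousAt_iff.mp hH η hη with ⟨δ, hδ, hδ'⟩
    refine ⟨Subtype.val ⁻¹' Metric.ball p.val (min δ (lastCoord n p.val / 2)),
      ⟨Or.inl (Or.inl ⟨p.val, hpos, _, lt_min hδ (by linarith),
        lt_of_le_of_lt (min_le_right _ _) (by linarith), rfl⟩),
        Set.mem_preimage.mpr (Metric.mem_ball_self (lt_min hδ (by linarith)))⟩, ?_⟩
    intro y hy
    rw [Set.mem_preimage, Metric.mem_ball] at hy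
    have hy1 : dist y.val p.val < δ := lt_of_lt_of_le hy (min_le_left _ _)
    have hy2 : dist y.val p.val < lastCoord n p.val / 2 :=
      lt_of_lt_of_le hy (min_le_right _ _)
    have hylc : 0 < lastCoord n y.val := by
      have := abs_le.mp (abs_lastCoord_sub_le hn y.val p.val)
      linarith [this.1]
    have e1 : bumpG n a ε y = min 1 (‖y.val - a‖ ^ 2 / (2 * ε * lastCoord n y.val)) := by
      rw [bumpG, if_neg (ne_of_gt hylc)]
    have e2 : bumpG n a ε p = min 1 (‖p.val - a‖ ^ 2 / (2 * ε * lastCoord n p.val)) := by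
      rw [bumpG, if_neg (ne_of_gt hpos)]
    rw [Metric.mem_ball, e1, e2]
    exact hδ' hy1
  · rcases eq_or_ne p.val a with hpa | hpa
    · -- the tangency point
      set δ := min ε (ε * η) / 2 with hδdef
      have hδ : 0 < δ := by
        have : 0 < min ε (ε * η) := lt_min hε (by positivity)
        positivity
      refine ⟨Subtype.val ⁻¹' tangentBall n p.val δ,
        ⟨Or.inr ⟨p.val, ⟨h0.symm, Set.notMem_empty _⟩, δ, hδ, rfl⟩,
          Set.mem_preimage.mpr (Or.inl rfl)⟩, ?_⟩
      intro y hy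
      rw [Set.mem_preimage] at hy
      rw [Metric.mem_ball, bumpG_tip ha (by rw [hpa] : p.val = a), Real.dist_eq]
      rcases hy with hy' | hy'
      · rw [Set.mem_singleton_iff] at hy'
        rw [bumpG_tip ha (by rw [hy', hpa])]
        simpa using hη
      · rw [hpa] at hy'
        have hylc : 0 < lastCoord n y.val := lastCoord_pos_of_mem hn ha hδ hy'
        have hy2 : ‖y.val - a‖ ^ 2 < 2 * δ * lastCoord n y.val := (mem_tb hn ha hδ _).mp hy'
        have e1 : bumpG n a ε y = min 1 (‖y.val - a‖ ^ 2 / (2 * ε * lastCoord n y.val)) := by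
          rw [bumpG, if_neg (ne_of_gt hylc)]
        rw [e1, sub_zero, abs_of_nonneg (le_min zero_le_one (by positivity))]
        have hratio : ‖y.val - a‖ ^ 2 / (2 * ε * lastCoord n y.val) < η := by
          rw [div_lt_iff₀ (by positivity)]
        -- 2δ ≤ ε * η
          have hδle : 2 * δ ≤ ε * η := by
            rw [hδdef]; have := min_le_right ε (ε * η); linarith
          nlinarith
        exact lt_of_le_of_lt (min_le_right _ _) hratio
    · -- another boundary point
      set d := dist p.val a with hddef
      have hd : 0 < d := dist_pos.mpr hpa
      set δ := min (d / 4) (d ^ 2 / (16 * ε)) with hδdef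
      have hδ : 0 < δ := lt_min (by positivity) (by positivity)
      refine ⟨Subtype.val ⁻¹' tangentBall n p.val δ,
        ⟨Or.inr ⟨p.val, ⟨h0.symm, Set.notMem_empty _⟩, δ, hδ, rfl⟩,
          Set.mem_preimage.mpr (Or.inl rfl)⟩, ?_⟩
      have hbp : bumpG n a ε p = 1 := by
        rw [bumpG, if_pos h0.symm, if_neg hpa]
      intro y hy
      rw [Set.mem_preimage] at hy
      rw [Metric.mem_ball, hbp]
      rcases hy with hy' | hy'
      · rw [Set.mem_singleton_iff] at hy'
        have : bumpG n a ε y = 1 := by rw [bumpG, if_pos (by rw [hy']; exact h0.symm),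
          if_neg (by rw [hy']; exact hpa)]
        rw [this]; simpa using hη
      · have hylc : 0 < lastCoord n y.val := lastCoord_pos_of_mem hn h0.symm hδ hy'
        have hdyp : dist y.val p.val < 2 * δ :=
          tb_subset_ball hn p.val hδ (Or.inr hy')
        have hyn : lastCoord n y.val < 2 * δ := by
          have h2 := abs_le.mp (abs_lastCoord_sub_le hn y.val p.val)
          rw [h0.symm] at h2  -- ?
          linarith [h2.2, hdyp]
        have hya : d - 2 * δ ≤ dist y.val a := by
          have := dist_triangle p.val y.val a
          rw [dist_comm p.val y.val] at this
          linarith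
        have hδ1 : δ ≤ d / 4 := min_le_left _ _
        have hδ2 : 16 * ε * δ ≤ d ^ 2 := by
          have h3 : δ ≤ d ^ 2 / (16 * ε) := min_le_right _ _
          rw [le_div_iff₀ (by positivity)] at h3
          linarith
        have hb : bumpG n a ε y = 1 := by
          rw [bumpG, if_neg (ne_of_gt hylc), min_eq_left]
          rw [le_div_iff₀ (by positivity), one_mul]
          have hnorm : ‖y.val - a‖ = dist y.val a := (dist_eq_norm _ _).symm
          rw [hnorm]
          nlinarith [dist_nonneg (x := y.val) (y := a)]
        rw [hb]; simpa using hη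

end NiemBump
open Topology in
theorem sep_fun {n : ℕ} (hn : 0 < n) {t : Set (HalfSpace n)} (ht : t ∈ niemGen n ∅)
    {x : HalfSpace n} (hxt : x ∈ t) :
    ∃ G : HalfSpace n → ℝ, Continuous[tau n ∅, inferInstance] G ∧ G x = 0 ∧
      ∀ y, y ∉ t → G y = 1 := by
  rcases lt_or_eq_of_le (show (0:ℝ) ≤ lastCoord n x.val from x.2) with hpos | h0
  · obtain ⟨r, hr, _, hsub⟩ := gen_shrink_pos hn ht hxt hpos
    refine ⟨fun y => min 1 (dist y.val x.val / r), ?_, ?_, ?_⟩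
    · apply cont_of_euclid hn
      exact continuous_const.min
        ((continuous_subtype_val.dist continuous_const).div_const r)
    · show min 1 (dist x.val x.val / r) = 0
      rw [dist_self, zero_div, min_eq_right zero_le_one]
    · intro y hy
      have h1 : y ∉ (Subtype.val ⁻¹' Metric.ball x.val r : Set (HalfSpace n)) :=
        fun h => hy (hsub h)
      rw [Set.mem_preimage, Metric.mem_ball, not_lt] at h1
      show min 1 (dist y.val x.val / r) = 1
      rw [min_eq_left]
      rw [le_div_iff₀ hr]; linarith
  · obtain ⟨ε, hε, rfl⟩ := gen_at_bdry hn ht hxt h0.symm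
    exact ⟨bumpG n x.val ε, bumpG_cont hn h0.symm hε, bumpG_tip h0.symm rfl,
      fun y hy => bumpG_one hn h0.symm hε hy⟩

theorem niem_creg {n : ℕ} (hn : 0 < n) :
    @CompletelyRegularSpace (HalfSpace n) (tau n ∅) := by
  letI : TopologicalSpace (HalfSpace n) := tau n ∅
  constructor
  intro x K hK hxK
  obtain ⟨t, ht, hxt, htK⟩ :=
    (niem_basis hn).exists_subset_of_mem_open (Set.mem_compl hxK) hK.isOpen_compl
  obtain ⟨G, hGc, hGx, hG1⟩ := sep_fun hn ht hxt
  refine ⟨fun y => Set.projIcc 0 1 zero_le_one (G y), continuous_projIcc.comp hGc, ?_, ?_⟩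
  · apply Subtype.ext
    rw [Set.coe_projIcc, hGx]
    norm_num
  · intro y hy
    have hyt : y ∉ t := fun h => htK h hy
    apply Subtype.ext
    rw [Set.coe_projIcc, hG1 y hyt]
    norm_num

theorem niemytzki_tychonoff (n : ℕ) (hn : 2 ≤ n) :
    @T1Space (HalfSpace n) (tau n ∅) ∧ @CompletelyRegularSpace (HalfSpace n) (tau n ∅) :=
  ⟨niem_t1 (by omega), niem_creg (by omega)⟩
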